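/- Let A, B, C be pairwise disjoint nonempty finite subsets of X with sizes a, b, c. Then the orthogonal projection of δ_{A|C} + δ_{B|C} onto the orthogonal complement of the line spanned by δ_{A|B} + δ_{A|C} + δ_{B|C} equals p_{AB} := (−(ac+bc)/(ab+ac+bc))·δ_{A|B} + (ab/(ab+ac+bc))·(δ_{A|C} + δ_{B|C}). -/

import Mathlib

open Finset
open scoped Classical

variable {X : Type*} [Fintype X] [DecidableEq X]

/-- Split pseudometric: coordinate at pair s is 1 if s meets both U and V, else 0. -/
noncomputable def splitDelta (U V : Finset X) : EuclideanSpace ℝ (Sym2 X) :=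
  WithLp.toLp 2 (fun s => if (∃ i ∈ s, i ∈ U) ∧ (∃ j ∈ s, j ∈ V) then 1 else 0)


lemma inner_splitDelta_self (A B : Finset X) (h : Disjoint A B) :
    @inner ℝ _ _ (splitDelta A B) (splitDelta A B) = (A.card : ℝ) * B.card := by
  rw [PiLp.inner_apply]
  simp only [splitDelta, PiLp.toLp_apply, RCLike.inner_apply, conj_trivial, ite_mul, one_mul, zero_mul, if_pos]
  have : (∑ x : Sym2 X, if (∃ i ∈ x, i ∈ A) ∧ ∃ j ∈ x, j ∈ B then (1:ℝ) else 0)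
      = ((Finset.univ.filter (fun x : Sym2 X => (∃ i ∈ x, i ∈ A) ∧ ∃ j ∈ x, j ∈ B)).card : ℝ) := by
    rw [Finset.sum_boole]
  rw [show (∑ x : Sym2 X, if (∃ i ∈ x, i ∈ A) ∧ ∃ j ∈ x, j ∈ B then
      (if (∃ i ∈ x, i ∈ A) ∧ ∃ j ∈ x, j ∈ B then (1:ℝ) else 0) else 0)
      = (∑ x : Sym2 X, if (∃ i ∈ x, i ∈ A) ∧ ∃ j ∈ x, j ∈ B then (1:ℝ) else 0) by
    refine Finset.sum_congr rfl fun x _ => ?_; split <;> simp_all]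
  rw [this]
  norm_cast
  rw [← Finset.card_product]
  apply (Finset.card_bij (fun (p : X × X) _ => Sym2.mk p.1 p.2) ?_ ?_ ?_).symm
  · rintro ⟨i, j⟩ hp
    simp only [Finset.mem_product] at hp
    simp only [Finset.mem_filter, Finset.mem_univ, true_and]
    exact ⟨⟨i, by simp, hp.1⟩, ⟨j, by simp, hp.2⟩⟩
  · rintro ⟨i₁, j₁⟩ h1 ⟨i₂, j₂⟩ h2 he
    simp only [Finset.mem_product] at h1 h2
    rw [Sym2.mk_eq_mk_iff] at he
    rcases he with he | he
    · exact he
    · simp only [Prod.swap_prod_mk, Prod.mk.injEq] at he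
      exact absurd (he.1 ▸ h1.1) (fun hh => Finset.disjoint_left.mp h hh h2.2)
  · intro s hs
    simp only [Finset.mem_filter, Finset.mem_univ, true_and] at hs
    obtain ⟨⟨i, hi, hiA⟩, ⟨j, hj, hjB⟩⟩ := hs
    have hij : i ≠ j := fun hh => Finset.disjoint_left.mp h hiA (hh ▸ hjB)
    refine ⟨(i, j), Finset.mem_product.mpr ⟨hiA, hjB⟩, ?_⟩
    exact (Sym2.eq_of_ne_mem hij hi hj (by simp) (by simp)).symm

lemma inner_splitDelta_zero (A B A' B' : Finset X)
    (h : ∀ s : Sym2 X, ((∃ i ∈ s, i ∈ A) ∧ ∃ j ∈ s, j ∈ B) →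
      ((∃ i ∈ s, i ∈ A') ∧ ∃ j ∈ s, j ∈ B') → False) :
    @inner ℝ _ _ (splitDelta A B) (splitDelta A' B') = 0 := by
  rw [PiLp.inner_apply]
  apply Finset.sum_eq_zero
  intro s _
  simp only [splitDelta, PiLp.toLp_apply, RCLike.inner_apply, conj_trivial]
  by_cases hP : (∃ i ∈ s, i ∈ A) ∧ ∃ j ∈ s, j ∈ B
  · rw [if_neg (fun hQ => h s hP hQ), zero_mul]
  · rw [if_neg hP, mul_zero]

lemma no_overlap_ABAC (A B C : Finset X) (hAB : Disjoint A B) (hAC : Disjoint A C)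
    (hBC : Disjoint B C) (s : Sym2 X)
    (h1 : (∃ i ∈ s, i ∈ A) ∧ (∃ j ∈ s, j ∈ B))
    (h2 : (∃ i ∈ s, i ∈ A) ∧ (∃ j ∈ s, j ∈ C)) : False := by
  obtain ⟨⟨i, hi, hiA⟩, ⟨j, hj, hjB⟩⟩ := h1
  obtain ⟨_, ⟨k, hk, hkC⟩⟩ := h2
  induction s using Sym2.inductionOn with
  | hf x y =>
    simp only [Sym2.mem_iff] at hi hj hk
    rcases hi with rfl | rfl <;> rcases hj with rfl | rfl <;> rcases hk with rfl | rfl <;>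
      first
      | exact Finset.disjoint_left.mp hAB hiA hjB
      | exact Finset.disjoint_left.mp hAC hiA hkC
      | exact Finset.disjoint_left.mp hBC hjB hkC

/-- The orthogonal projection of δ_{A|C} + δ_{B|C} onto the orthogonal complement of the
line spanned by δ_{A|B} + δ_{A|C} + δ_{B|C} equals
p_{AB} = (−(ac+bc)/(ab+ac+bc))·δ_{A|B} + (ab/(ab+ac+bc))·(δ_{A|C} + δ_{B|C}). -/
theorem projection_eq_pAB (A B C : Finset X)
    (hA : A.Nonempty) (hB : B.Nonempty) (hC : C.Nonempty)
    (hAB : Disjoint A B) (hAC : Disjoint A C) (hBC : Disjoint B C) :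
    let a : ℝ := A.card; let b : ℝ := B.card; let c : ℝ := C.card
    (Submodule.orthogonalProjectionOnto
        ((ℝ ∙ (splitDelta A B + splitDelta A C + splitDelta B C))ᗮ)
        (splitDelta A C + splitDelta B C) : EuclideanSpace ℝ (Sym2 X)) =
      (-(a * c + b * c) / (a * b + a * c + b * c)) • splitDelta A B +
        (a * b / (a * b + a * c + b * c)) • (splitDelta A C + splitDelta B C) := by
  intro a b c
  set u := splitDelta A B with hu
  set x := splitDelta A C with hx
  set y := splitDelta B C with hy
  set S : ℝ := a * b + a * c + b * c with hS
  have ha : 0 < a := by show (0:ℝ) < (A.card:ℝ); exact_mod_cast Finset.card_pos.mpr hA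
  have hb : 0 < b := by show (0:ℝ) < (B.card:ℝ); exact_mod_cast Finset.card_pos.mpr hB
  have hc : 0 < c := by show (0:ℝ) < (C.card:ℝ); exact_mod_cast Finset.card_pos.mpr hC
  have hSpos : 0 < S := by positivity
  have hSne : S ≠ 0 := ne_of_gt hSpos
  have huu : @inner ℝ _ _ u u = a * b := inner_splitDelta_self A B hAB
  have hxx : @inner ℝ _ _ x x = a * c := inner_splitDelta_self A C hAC
  have hyy : @inner ℝ _ _ y y = b * c := inner_splitDelta_self B C hBC
  have hux : @inner ℝ _ _ u x = 0 :=
    inner_splitDelta_zero A B A C (fun s h1 h2 =>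
      no_overlap_ABAC A B C hAB hAC hBC s h1 h2)
  have huy : @inner ℝ _ _ u y = 0 :=
    inner_splitDelta_zero A B B C (fun s h1 h2 =>
      no_overlap_ABAC B A C hAB.symm hBC (by exact hAC) s ⟨h1.2, h1.1⟩ ⟨h1.2, h2.2⟩)
  have hxy : @inner ℝ _ _ x y = 0 :=
    inner_splitDelta_zero A C B C (fun s h1 h2 =>
      no_overlap_ABAC A C B hAC hAB hBC.symm s ⟨h1.1, h1.2⟩ ⟨h1.1, h2.1⟩)
  have hxu : @inner ℝ _ _ x u = 0 := by rw [real_inner_comm]; exact hux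
  have hyu : @inner ℝ _ _ y u = 0 := by rw [real_inner_comm]; exact huy
  have hyx : @inner ℝ _ _ y x = 0 := by rw [real_inner_comm]; exact hxy
  set p : EuclideanSpace ℝ (Sym2 X) :=
    (-(a * c + b * c) / S) • u + (a * b / S) • (x + y) with hp
  rw [← Submodule.starProjection_apply]
  apply Submodule.eq_starProjection_of_mem_orthogonal' (v := p)
    (z := ((a * c + b * c) / S) • (u + x + y))
  · rw [Submodule.mem_orthogonal_singleton_iff_inner_right]
    simp only [hp, inner_add_left, inner_add_right, real_inner_smul_right,
      huu, hxx, hyy, hux, huy, hxy, hxu, hyu, hyx]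
    field_simp
    ring
  · exact Submodule.smul_mem _ _
      (Submodule.le_orthogonal_orthogonal _ (Submodule.mem_span_singleton_self _))
  · rw [hp]
    match_scalars <;> field_simp <;> ring
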